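/- arXiv:2602.12468 — 2 statements merged into one kernel-verified Lean document; each statement's English description precedes it below -/
import Mathlib

section
/- Theorem (Expected Probability): the probability that a random word of length l is accepted by A equals the sum over accepting states of the final state distribution; that is, Σ_{(s₁,…,s_l) ∈ Σ^l with evalFrom q₀ (s₁⋯s_l) ∈ F} ∏_{k=1}^l p_k(s_k) = Σ_{q ∈ F} (e_{q₀}ᵀ · M₁·M₂⋯M_l)[q], where e_{q₀} is the indicator vector of the start state. In other words, Algorithm 1 returns the expected probability E_{s}[s ∈ L(A)] for a word s sampled position-wise independently from p₁,…,p_l. -/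
open Finset

lemma prod_entry {α Q : Type*} [Fintype α] [Fintype Q] [DecidableEq Q]
    (step : Q → α → Q) :
    ∀ (l : ℕ) (p : Fin l → α → ℝ) (M : Fin l → Matrix Q Q ℝ),
    (∀ k q q', M k q q' = ∑ a ∈ Finset.univ.filter fun a => step q a = q', p k a) →
    ∀ r q, (List.ofFn M).prod r q
      = ∑ s : Fin l → α, if (List.ofFn s).foldl step r = q then ∏ k, p k (s k) else 0 := by
  intro l
  induction l with
  | zero =>
    intro p M hM r q
    simp [List.ofFn_zero, Matrix.one_apply, eq_comm]
  | succ n ih =>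
    intro p M hM r q
    have hrec := ih (fun k => p k.succ) (fun k => M k.succ) (fun k q q' => hM k.succ q q')
    rw [List.ofFn_succ, List.prod_cons, Matrix.mul_apply]
    have key : ∀ r', M 0 r r' = ∑ a ∈ Finset.univ.filter fun a => step r a = r', p 0 a :=
      hM 0 r
    calc ∑ r', M 0 r r' * (List.ofFn fun k => M k.succ).prod r' q
        = ∑ r', ∑ a ∈ Finset.univ.filter (fun a => step r a = r'),
            p 0 a * (List.ofFn fun k => M k.succ).prod r' q := by
          simp_rw [key, Finset.sum_mul]
      _ = ∑ a : α, p 0 a * (List.ofFn fun k => M k.succ).prod (step r a) q := by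
          rw [← Finset.sum_fiberwise Finset.univ (fun a => step r a)
            (fun a => p 0 a * (List.ofFn fun k => M k.succ).prod (step r a) q)]
          refine Finset.sum_congr rfl fun r' _ => Finset.sum_congr rfl fun a ha => ?_
          rw [(Finset.mem_filter.mp ha).2]
      _ = ∑ a : α, ∑ s' : Fin n → α,
            p 0 a * if (List.ofFn s').foldl step (step r a) = q
              then ∏ k, p k.succ (s' k) else 0 := by
          simp_rw [hrec, Finset.mul_sum]
      _ = ∑ s : Fin (n+1) → α,
            if (List.ofFn s).foldl step r = q then ∏ k, p k (s k) else 0 := by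
          rw [← (Fin.consEquiv (fun _ : Fin (n+1) => α)).sum_comp
            (fun s => if (List.ofFn s).foldl step r = q then ∏ k, p k (s k) else 0)]
          rw [Fintype.sum_prod_type]
          refine Finset.sum_congr rfl fun a _ => Finset.sum_congr rfl fun s' _ => ?_
          simp only [Fin.consEquiv, Equiv.coe_fn_mk]
          simp only [List.ofFn_succ, List.foldl_cons, Fin.prod_univ_succ]
          simp [mul_ite]

/-- **Expected Probability.** The probability that a random word of length `l`
(the `k`-th letter sampled independently from `p k`) is accepted by the DFA equals the sum
over accepting states of the final state distribution:
`Σ_{s ∈ α^l, evalFrom q₀ s ∈ F} ∏_k p k (s k) = Σ_{q ∈ F} (e_{q₀}ᵀ · M₁·M₂⋯M_l)[q]`,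
where `e_{q₀}` is the indicator vector of the start state.  This is the value returned by
Algorithm 1. -/
theorem expected_acceptance_probability
    {α Q : Type*} [Fintype α] [Fintype Q] [DecidableEq Q]
    (step : Q → α → Q) (q₀ : Q) (F : Finset Q) (l : ℕ)
    (p : Fin l → α → ℝ)
    (hp0 : ∀ k a, 0 ≤ p k a) (hp1 : ∀ k, ∑ a, p k a = 1)
    (M : Fin l → Matrix Q Q ℝ)
    (hM : ∀ k q q', M k q q' = ∑ a ∈ Finset.univ.filter fun a => step q a = q', p k a)
    (e : Q → ℝ) (he : ∀ r, e r = if r = q₀ then 1 else 0) :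
    ∑ s ∈ Finset.univ.filter fun s : Fin l → α => (List.ofFn s).foldl step q₀ ∈ F,
        ∏ k, p k (s k)
      = ∑ q ∈ F, Matrix.vecMul e (List.ofFn M).prod q := by
  have hv : ∀ q, Matrix.vecMul e (List.ofFn M).prod q = (List.ofFn M).prod q₀ q := by
    intro q
    simp only [Matrix.vecMul, dotProduct, he]
    rw [Finset.sum_eq_single q₀] <;> simp +contextual
  simp_rw [hv, prod_entry step l p M hM q₀]
  rw [Finset.sum_comm]
  rw [Finset.sum_filter]
  refine Finset.sum_congr rfl fun s _ => ?_
  rw [Finset.sum_ite_eq F ((List.ofFn s).foldl step q₀) (fun _ => ∏ k, p k (s k))]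
end

section
/- End-to-end correctness of the guidance score: for per-position token distributions p₁,…,p_l on V, the probability that the concatenation of l independently sampled tokens lies in L(A) equals the value computed by Algorithm 1 on the token-level automaton; that is, Σ_{(v₁,…,v_l) ∈ V^l with evalFrom q₀ (emb(v₁) ++ ⋯ ++ emb(v_l)) ∈ F} ∏_{k=1}^l p_k(v_k) = Σ_{q ∈ F} (e_{q₀}ᵀ · M₁^V·M₂^V⋯M_l^V)[q], where M_k^V[q][q'] = Σ_{v ∈ V : evalFrom q (emb v) = q'} p_k(v). -/
lemma aux_fiber {α V Q : Type*} [Fintype V] [Fintype Q] [DecidableEq Q]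
    (step : Q → α → Q) (emb : V → List α) :
    ∀ (l : ℕ) (p : Fin l → V → ℝ) (MV : Fin l → Matrix Q Q ℝ)
      (hMV : ∀ k q q',
        MV k q q' = ∑ v ∈ Finset.univ.filter fun v => (emb v).foldl step q = q', p k v)
      (q q' : Q),
    ∑ s ∈ Finset.univ.filter
        (fun s : Fin l → V => ((List.ofFn s).map emb).flatten.foldl step q = q'),
        ∏ k, p k (s k) = (List.ofFn MV).prod q q' := by
  intro l
  induction l with
  | zero =>
    intro p MV hMV q q'
    simp only [List.ofFn_zero, List.map_nil, List.flatten_nil, List.foldl_nil,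
      List.prod_nil, Matrix.one_apply]
    rw [Finset.sum_filter]
    split <;> simp_all
  | succ n ih =>
    intro p MV hMV q q'
    rw [Finset.sum_filter, ← Equiv.sum_comp (Fin.consEquiv fun _ : Fin (n + 1) => V)]
    rw [Fintype.sum_prod_type]
    have key : ∀ (v : V) (t : Fin n → V),
        (if ((List.ofFn (Fin.cons v t : Fin (n+1) → V)).map emb).flatten.foldl step q = q' then
            ∏ k, p k ((Fin.cons v t : Fin (n+1) → V) k) else 0)
          = p 0 v * (if ((List.ofFn t).map emb).flatten.foldl step
              ((emb v).foldl step q) = q' then ∏ k, p k.succ (t k) else 0) := by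
      intro v t
      rw [List.ofFn_succ]
      simp only [Fin.cons_zero, Fin.cons_succ, List.map_cons, List.flatten_cons,
        List.foldl_append, Fin.prod_univ_succ]
      split <;> ring
    simp only [Fin.consEquiv, Equiv.coe_fn_mk, key]
    refine (Finset.sum_congr rfl fun v _ => Finset.sum_congr rfl fun t _ => key v t).trans ?_
    calc ∑ v, ∑ t : Fin n → V, p 0 v *
          (if ((List.ofFn t).map emb).flatten.foldl step ((emb v).foldl step q) = q'
            then ∏ k, p k.succ (t k) else 0)
        = ∑ v, p 0 v *
            (List.ofFn fun i : Fin n => MV i.succ).prod ((emb v).foldl step q) q' := by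
          refine Finset.sum_congr rfl fun v _ => ?_
          rw [← Finset.mul_sum, ← Finset.sum_filter,
            ih (fun k => p k.succ) (fun k => MV k.succ) (fun k q q' => hMV k.succ q q')]
      _ = ∑ q'' : Q, ∑ v ∈ Finset.univ.filter (fun v => (emb v).foldl step q = q''),
            p 0 v * (List.ofFn fun i : Fin n => MV i.succ).prod q'' q' := by
          rw [← Finset.sum_fiberwise (g := fun v => (emb v).foldl step q)]
          exact Finset.sum_congr rfl fun q'' _ => Finset.sum_congr rfl fun v hv => by
            rw [(Finset.mem_filter.mp hv).2]
      _ = (List.ofFn MV).prod q q' := by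
          rw [List.ofFn_succ, List.prod_cons, Matrix.mul_apply]
          exact Finset.sum_congr rfl fun q'' _ => by
            rw [← Finset.sum_mul, ← hMV]

/-- **end-to-end correctness of the guidance score.** For per-position token
distributions `p₁,…,p_l` on the finite token alphabet `V`, the probability that the
concatenation of `l` independently sampled tokens is accepted by the character-level DFA
equals the value computed by Algorithm 1 on the token-level automaton:
`Σ_{(v₁,…,v_l), evalFrom q₀ (emb v₁ ++ ⋯ ++ emb v_l) ∈ F} ∏_k p k (v k)
  = Σ_{q ∈ F} (e_{q₀}ᵀ · M₁^V·⋯·M_l^V)[q]`,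
where `M_k^V[q][q'] = Σ_{v : evalFrom q (emb v) = q'} p k v` and `e_{q₀}` is the indicator
vector of the start state. -/
theorem guidance_score_end_to_end
    {α V Q : Type*} [Fintype V] [Fintype Q] [DecidableEq Q]
    (step : Q → α → Q) (q₀ : Q) (F : Finset Q)
    (emb : V → List α) (l : ℕ)
    (p : Fin l → V → ℝ)
    (hp0 : ∀ k v, 0 ≤ p k v) (hp1 : ∀ k, ∑ v, p k v = 1)
    (MV : Fin l → Matrix Q Q ℝ)
    (hMV : ∀ k q q',
      MV k q q' = ∑ v ∈ Finset.univ.filter fun v => (emb v).foldl step q = q', p k v)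
    (e : Q → ℝ) (he : ∀ r, e r = if r = q₀ then 1 else 0) :
    ∑ s ∈ Finset.univ.filter
        fun s : Fin l → V => ((List.ofFn s).map emb).flatten.foldl step q₀ ∈ F,
        ∏ k, p k (s k)
      = ∑ q ∈ F, Matrix.vecMul e (List.ofFn MV).prod q := by
  have h1 : ∀ q' : Q, Matrix.vecMul e (List.ofFn MV).prod q' = (List.ofFn MV).prod q₀ q' := by
    intro q'
    simp only [Matrix.vecMul, dotProduct, he, ite_mul, one_mul, zero_mul]
    simp
  simp only [h1]
  rw [Finset.sum_filter]
  have h2 : ∀ s : Fin l → V,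
      (if ((List.ofFn s).map emb).flatten.foldl step q₀ ∈ F then ∏ k, p k (s k) else 0)
        = ∑ q' ∈ F, if ((List.ofFn s).map emb).flatten.foldl step q₀ = q'
            then ∏ k, p k (s k) else 0 := by
    intro s
    rw [← Finset.sum_ite_eq' F (((List.ofFn s).map emb).flatten.foldl step q₀)
      (fun _ => ∏ k, p k (s k))]
    exact Finset.sum_congr rfl fun q' _ => by simp [eq_comm]
  simp only [h2]
  rw [Finset.sum_comm]
  refine Finset.sum_congr rfl fun q' _ => ?_
  rw [← Finset.sum_filter, aux_fiber step emb l p MV hMV]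
end
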